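/- Let G be a finite p-group of order p^n, k = F_p the field with p elements, and D_k = Sym_k(kG)/(−1 + Σ_{g∈G} X_g) the dehomogenized symmetric algebra with its G-action. If A = k[a_1, …, a_m] ≤ D_k is a trace-surjective G-subalgebra generated by m elements, then m ≥ n. -/

import Mathlib

open Finset

lemma coset_sum_zero {p : ℕ} [Fact p.Prime] {G : Type*} [Group G] [Fintype G]
    (H : Subgroup G) (hdvd : p ∣ Nat.card H) (f : G → ZMod p)
    (hf : ∀ c u : G, u ∈ H → f (c * u) = f c) : ∑ g : G, f g = 0 := by
  classical
  have := Fintype.ofFinite (G ⧸ H)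
  rw [← Finset.sum_fiberwise_of_maps_to (g := fun g : G => (QuotientGroup.mk g : G ⧸ H))
    (fun g _ => Finset.mem_univ _) f]
  refine Finset.sum_eq_zero fun y _ => ?_
  have hval : ∀ g ∈ univ.filter (fun g : G => (QuotientGroup.mk g : G ⧸ H) = y),
      f g = f y.out := by
    intro g hg
    have hmem : y.out⁻¹ * g ∈ H := by
      rw [← QuotientGroup.eq]
      rw [Finset.mem_filter] at hg
      rw [QuotientGroup.out_eq', hg.2]
    have := hf y.out (y.out⁻¹ * g) hmem
    rwa [mul_inv_cancel_left] at this
  rw [Finset.sum_congr rfl hval, Finset.sum_const]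
  have hcardfib : (univ.filter (fun g : G => (QuotientGroup.mk g : G ⧸ H) = y)).card
      = Nat.card H := by
    classical
    rw [show Nat.card H = Fintype.card {g : G // g ∈ H} from Nat.card_eq_fintype_card,
      Fintype.card_subtype]
    refine Finset.card_nbij' (fun g => y.out⁻¹ * g) (fun u => y.out * u) ?_ ?_ ?_ ?_
    · intro g hg
      rw [Finset.mem_coe, Finset.mem_filter] at hg
      simp only [Finset.mem_coe, Finset.mem_filter, Finset.mem_univ, true_and]
      rw [← QuotientGroup.eq, QuotientGroup.out_eq', hg.2]
    · intro u hu
      simp only [Finset.mem_coe, Finset.mem_filter, Finset.mem_univ, true_and] at hu ⊢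
      rw [← QuotientGroup.out_eq' y, QuotientGroup.eq]
      simpa using hu
    · intro g _; simp
    · intro u _; simp
  rw [hcardfib]
  obtain ⟨t, ht⟩ := hdvd
  rw [ht]
  have : ((p * t : ℕ) : ZMod p) = 0 := by
    rw [ZMod.natCast_eq_zero_iff]; exact Dvd.intro t rfl
  rw [nsmul_eq_mul, this, zero_mul]

lemma aux_bound {p n m : ℕ} [Fact p.Prime] {G : Type*} [Group G] [Fintype G]
    (hcard : Fintype.card G = p ^ n) {D : Type*} [CommRing D] [Algebra (ZMod p) D]
    [MulSemiringAction G D]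
    (ev : G → (D →ₐ[ZMod p] ZMod p))
    (hsmul : ∀ (c g : G) (d : D), ev g (c • d) = ev (c⁻¹ * g) d)
    (a : Fin m → D)
    (hAst : ∀ (g : G), ∀ b ∈ Algebra.adjoin (ZMod p) (Set.range a),
        g • b ∈ Algebra.adjoin (ZMod p) (Set.range a))
    (hAts : ∃ w ∈ Algebra.adjoin (ZMod p) (Set.range a), (∑ g : G, g • w) = 1) :
    n ≤ m := by
  classical
  have hp : p.Prime := Fact.out
  set S := Algebra.adjoin (ZMod p) (Set.range a) with hS
  obtain ⟨w, hwS, hw⟩ := hAts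
  have key : ∀ (c γ : G) (d : D), ev (c * γ) d = ev γ (c⁻¹ • d) := by
    intro c γ d
    have := hsmul c⁻¹ γ d
    rw [inv_inv] at this
    exact this.symm
  have hinj : Function.Injective (fun g : G => fun i : Fin m => ev g (a i)) := by
    intro g h hgh
    by_contra hne
    have hag : ∀ d ∈ S, ev g d = ev h d := by
      intro d hd
      have hle : S ≤ AlgHom.equalizer (ev g) (ev h) := by
        apply Algebra.adjoin_le
        rintro _ ⟨i, rfl⟩
        exact congrFun hgh i
      exact hle hd
    set H : Subgroup G :=
      { carrier := {u | ∀ d ∈ S, ev u d = ev 1 d}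
        one_mem' := fun d _ => rfl
        mul_mem' := by
          intro u v hu hv d hd
          have h1 : ev (u * v) d = ev v (u⁻¹ • d) := key u v d
          have h2 : ev v (u⁻¹ • d) = ev 1 (u⁻¹ • d) := hv _ (hAst u⁻¹ d hd)
          have h3 : ev (u * 1) d = ev 1 (u⁻¹ • d) := key u 1 d
          rw [mul_one] at h3
          rw [h1, h2, ← h3]
          exact hu d hd
        inv_mem' := by
          intro u hu d hd
          have h1 : ev (u⁻¹ * 1) d = ev 1 ((u⁻¹)⁻¹ • d) := key u⁻¹ 1 d
          rw [mul_one, inv_inv] at h1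
          have h2 : ev u (u • d) = ev 1 (u • d) := hu _ (hAst u d hd)
          have h3 : ev u (u • d) = ev (u⁻¹ * u) d := hsmul u u d
          rw [inv_mul_cancel] at h3
          rw [h1, ← h2, h3] } with hHdef
    have hmem : g⁻¹ * h ∈ H := by
      intro d hd
      have h1 : ev (g⁻¹ * h) d = ev h ((g⁻¹)⁻¹ • d) := key g⁻¹ h d
      rw [inv_inv] at h1
      have h2 : ev h (g • d) = ev g (g • d) := (hag _ (hAst g d hd)).symm
      have h3 : ev g (g • d) = ev (g⁻¹ * g) d := hsmul g g d
      rw [inv_mul_cancel] at h3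
      rw [h1, h2, h3]
    have hne1 : g⁻¹ * h ≠ 1 := by
      simp only [ne_eq, inv_mul_eq_one]
      exact hne
    have hdvd : p ∣ Nat.card H := by
      have hdvd' : Nat.card H ∣ p ^ n := by
        have := Subgroup.card_subgroup_dvd_card H
        simpa [Nat.card_eq_fintype_card, hcard] using this
      obtain ⟨i, hi, hcardH⟩ := (Nat.dvd_prime_pow hp).mp hdvd'
      rcases Nat.eq_zero_or_pos i with hi0 | hipos
      · exfalso
        rw [hi0, pow_zero] at hcardH
        have : H = ⊥ := Subgroup.eq_bot_of_card_eq H hcardH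
        rw [this] at hmem
        exact hne1 (Subgroup.mem_bot.mp hmem)
      · rw [hcardH]
        exact dvd_pow_self p hipos.ne'
    have hsum0 : ∑ c : G, ev c w = 0 := by
      apply coset_sum_zero H hdvd
      intro c u hu
      have h1 : ev (c * u) w = ev u (c⁻¹ • w) := key c u w
      have h2 : ev u (c⁻¹ • w) = ev 1 (c⁻¹ • w) := hu _ (hAst c⁻¹ w hwS)
      have h3 : ev (c * 1) w = ev 1 (c⁻¹ • w) := key c 1 w
      rw [mul_one] at h3
      rw [h1, h2, ← h3]
    have hsum1 : ∑ c : G, ev c w = 1 := by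
      have := congrArg (ev 1) hw
      rw [map_sum, map_one] at this
      have heq : ∀ c : G, ev 1 (c • w) = ev c⁻¹ w := by
        intro c
        have := hsmul c 1 w
        rwa [mul_one] at this
      rw [Finset.sum_congr rfl (fun c _ => heq c)] at this
      rw [← this]
      exact (Fintype.sum_equiv (Equiv.inv G) _ _ (fun c => rfl)).symm
    rw [hsum0] at hsum1
    exact zero_ne_one hsum1
  have hNZ : NeZero p := ⟨hp.ne_zero⟩
  have hle : Fintype.card G ≤ Fintype.card (Fin m → ZMod p) :=
    Fintype.card_le_of_injective _ hinj
  rw [hcard, Fintype.card_fun, ZMod.card, Fintype.card_fin] at hle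
  exact (Nat.pow_le_pow_iff_right hp.one_lt).mp hle

/-- Let `G` be a finite `p`-group of order `p^n`, `k = F_p = ZMod p`, and let
`D = D_k = Sym_k(kG)/(-1 + Σ_g X_g)` be the dehomogenized symmetric algebra, presented
abstractly via its defining properties (elements `x : G → D` permuted regularly by `G`,
summing to `1`, generating `D`, algebraically independent away from `1`).  If
`A = k[a_1, …, a_m] ≤ D` is a `G`-stable trace-surjective subalgebra generated by `m`
elements, then `m ≥ n`. -/
theorem generators_lower_bound
    {p n m : ℕ} [Fact p.Prime]
    (G : Type*) [Group G] [Fintype G] (hcard : Fintype.card G = p ^ n)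
    (D : Type*) [CommRing D] [Algebra (ZMod p) D] [MulSemiringAction G D]
    [SMulCommClass G (ZMod p) D]
    (x : G → D)
    (hsum : (∑ g : G, x g) = 1)
    (hact : ∀ g h : G, g • x h = x (g * h))
    (hgen : Algebra.adjoin (ZMod p) (Set.range x) = ⊤)
    (hind : AlgebraicIndependent (ZMod p) (fun g : {g : G // g ≠ 1} => x g.val))
    (a : Fin m → D)
    (hAst : ∀ (g : G), ∀ b ∈ Algebra.adjoin (ZMod p) (Set.range a),
        g • b ∈ Algebra.adjoin (ZMod p) (Set.range a))
    (hAts : ∃ w ∈ Algebra.adjoin (ZMod p) (Set.range a), (∑ g : G, g • w) = 1) :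
    n ≤ m := by
  classical
  set k := ZMod p with hk
  set x' : {g : G // g ≠ 1} → D := fun g => x g.val with hx'
  -- x 1 in terms of the others
  have hx1 : x 1 = 1 - ∑ i : {g : G // g ≠ 1}, x' i := by
    have h1 : x 1 + ∑ g ∈ Finset.univ.erase 1, x g = ∑ g : G, x g :=
      Finset.add_sum_erase _ _ (Finset.mem_univ 1)
    have h2 : ∑ g ∈ Finset.univ.erase 1, x g = ∑ i : {g : G // g ≠ 1}, x' i := by
      apply Finset.sum_subtype
      intro g
      simp [Finset.mem_erase]
    rw [h2, hsum] at h1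
    linear_combination h1
  have htop : Algebra.adjoin k (Set.range x') = ⊤ := by
    rw [← top_le_iff, ← hgen]
    apply Algebra.adjoin_le
    rintro _ ⟨g, rfl⟩
    by_cases hg : g = 1
    · subst hg
      rw [hx1]
      exact sub_mem (one_mem _)
        (Subalgebra.sum_mem _ fun i _ => Algebra.subset_adjoin ⟨i, rfl⟩)
    · exact Algebra.subset_adjoin ⟨⟨g, hg⟩, rfl⟩
  -- inclusion of D into adjoin of x'
  let incl : D →ₐ[k] (Algebra.adjoin k (Set.range x')) :=
    ((Subalgebra.equivOfEq ⊤ _ htop.symm).toAlgHom).comp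
      (Subalgebra.topEquiv.symm.toAlgHom)
  have hincl : ∀ d : D, (incl d : D) = d := fun d => rfl
  -- evaluation maps
  let ev : G → (D →ₐ[k] k) := fun g =>
    (MvPolynomial.aeval (fun i : {g : G // g ≠ 1} => if (i : G) = g then (1 : k) else 0)).comp
      ((hind.repr).comp incl)
  have hrepr : ∀ (h : G) (hh : h ≠ 1), hind.repr (incl (x h)) = MvPolynomial.X ⟨h, hh⟩ := by
    intro h hh
    have : hind.aevalEquiv (MvPolynomial.X ⟨h, hh⟩) = incl (x h) := by
      apply Subtype.ext
      rw [AlgebraicIndependent.aevalEquiv_apply_coe, MvPolynomial.aeval_X, hincl]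
    exact (AlgEquiv.symm_apply_eq _).mpr this.symm
  have hxval : ∀ g h : G, ev g (x h) = if h = g then 1 else 0 := by
    intro g h
    by_cases hh : h = 1
    · subst hh
      have : ev g (x 1) = 1 - ∑ i : {g : G // g ≠ 1},
          (if (i : G) = g then (1 : k) else 0) := by
        rw [hx1, map_sub, map_one, map_sum]
        congr 1
        refine Finset.sum_congr rfl fun i _ => ?_
        show ev g (x' i) = _
        simp only [ev, AlgHom.comp_apply]
        rw [show x' i = x i.val from rfl, hrepr i.val i.prop, MvPolynomial.aeval_X]
      rw [this]
      by_cases hg : g = 1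
      · subst hg
        rw [if_pos rfl]
        rw [Finset.sum_eq_zero, sub_zero]
        intro i _
        exact if_neg i.prop
      · rw [if_neg (fun hc => hg hc.symm)]
        rw [Finset.sum_eq_single (⟨g, hg⟩ : {g : G // g ≠ 1})]
        · simp
        · intro b _ hb
          refine if_neg fun hc => hb (Subtype.ext hc)
        · intro hb
          exact absurd (Finset.mem_univ _) hb
    · simp only [ev, AlgHom.comp_apply]
      rw [hrepr h hh]
      simp
  have hevsmul : ∀ (c g : G) (d : D), ev g (c • d) = ev (c⁻¹ * g) d := by
    intro c g d
    have hext : ∀ (φ ψ : D →ₐ[k] k), (∀ h : G, φ (x h) = ψ (x h)) → φ = ψ := by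
      intro φ ψ hφ
      have hle : Algebra.adjoin k (Set.range x) ≤ AlgHom.equalizer φ ψ := by
        apply Algebra.adjoin_le
        rintro _ ⟨h, rfl⟩
        exact hφ h
      ext d'
      have : d' ∈ AlgHom.equalizer φ ψ := by
        rw [hgen, top_le_iff] at hle
        rw [hle]
        trivial
      exact this
    have := hext ((ev g).comp (MulSemiringAction.toAlgHom k D c)) (ev (c⁻¹ * g)) ?_
    · exact congrFun (congrArg DFunLike.coe this) d
    · intro h
      simp only [AlgHom.comp_apply, MulSemiringAction.toAlgHom_apply]
      rw [hact, hxval, hxval]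
      congr 1
      simp only [eq_iff_iff]
      constructor
      · intro hch; rw [← hch]; group
      · intro hch; rw [hch]; group
  exact aux_bound hcard ev hevsmul a hAst hAts
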